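/- Let 𝔤 = 𝔤_{4.4} be the 4-dimensional real Lie algebra with basis e₁,...,e₄ and nonzero brackets [e₁,e₄] = e₁, [e₂,e₄] = e₁ + e₂, [e₃,e₄] = e₂ + e₃. A 4×4 real matrix R equals η·Id + D for some η ∈ ℝ and some derivation D of 𝔤 if and only if R₂₁ = R₃₁ = R₄₁ = 0, R₃₂ = R₄₂ = R₄₃ = 0, R₂₃ = R₁₂, and R₁₁ = R₂₂ = R₃₃. In this case η = R₄₄. -/
import Mathlib
open Matrix

def br (x y : Fin 4 → ℝ) : Fin 4 → ℝ :=
  ![(x 0 * y 3 - x 3 * y 0) + (x 1 * y 3 - x 3 * y 1), (x 1 * y 3 - x 3 * y 1) + (x 2 * y 3 - x 3 * y 2), (x 2 * y 3 - x 3 * y 2), (0:ℝ)]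

def IsDer (D : Matrix (Fin 4) (Fin 4) ℝ) : Prop :=
  ∀ x y : Fin 4 → ℝ, D.mulVec (br x y) = br (D.mulVec x) y + br x (D.mulVec y)

theorem der_iff (D : Matrix (Fin 4) (Fin 4) ℝ) : IsDer D ↔
    (D 1 0 = 0 ∧ D 2 0 = 0 ∧ D 3 0 = 0 ∧ D 2 1 = 0 ∧ D 3 1 = 0 ∧ D 3 2 = 0 ∧
     D 3 3 = 0 ∧ D 1 2 = D 0 1 ∧ D 0 0 = D 1 1 ∧ D 1 1 = D 2 2) := by
  constructor
  · intro hD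
    have h14 := hD ![1,0,0,0] ![0,0,0,1]
    have h24 := hD ![0,1,0,0] ![0,0,0,1]
    have h34 := hD ![0,0,1,0] ![0,0,0,1]
    have h13 := hD ![1,0,0,0] ![0,0,1,0]
    have e14_0 := congrFun h14 0
    have e14_1 := congrFun h14 1
    have e14_2 := congrFun h14 2
    have e14_3 := congrFun h14 3
    have e24_0 := congrFun h24 0
    have e24_1 := congrFun h24 1
    have e24_2 := congrFun h24 2
    have e24_3 := congrFun h24 3
    have e34_0 := congrFun h34 0
    have e34_1 := congrFun h34 1
    have e34_2 := congrFun h34 2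
    have e34_3 := congrFun h34 3
    have e13_0 := congrFun h13 0
    have e13_1 := congrFun h13 1
    simp [mulVec, br, dotProduct, Fin.sum_univ_four] at e14_0 e14_1 e14_2 e14_3 e24_0 e24_1 e24_2 e24_3 e34_0 e34_1 e34_2 e34_3 e13_0 e13_1
    refine ⟨?_,?_,?_,?_,?_,?_,?_,?_,?_,?_⟩ <;> linarith
  · rintro ⟨h10,h20,h30,h21,h31,h32,h33,h12,h00,h11⟩ x y
    funext i
    fin_cases i <;>
      simp [mulVec, br, dotProduct, Fin.sum_univ_four, h10,h20,h30,h21,h31,h32,h33,h12,h00,h11] <;>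
      ring

theorem stmt_14 (R : Matrix (Fin 4) (Fin 4) ℝ) :
    ((∃ (η : ℝ) (D : Matrix (Fin 4) (Fin 4) ℝ), IsDer D ∧
        R = η • (1 : Matrix (Fin 4) (Fin 4) ℝ) + D) ↔
      (R 1 0 = 0 ∧ R 2 0 = 0 ∧ R 3 0 = 0 ∧ R 2 1 = 0 ∧ R 3 1 = 0 ∧ R 3 2 = 0 ∧ R 1 2 = R 0 1 ∧ R 0 0 = R 1 1 ∧ R 1 1 = R 2 2)) ∧
    (∀ (η : ℝ) (D : Matrix (Fin 4) (Fin 4) ℝ), IsDer D →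
      R = η • (1 : Matrix (Fin 4) (Fin 4) ℝ) + D → η = R 3 3) := by
  constructor
  · constructor
    · rintro ⟨η, D, hD, rfl⟩
      rw [der_iff] at hD
      obtain ⟨h10,h20,h30,h21,h31,h32,h33,h12,h00,h11⟩ := hD
      refine ⟨?_,?_,?_,?_,?_,?_,?_,?_,?_⟩ <;>
        simp [Matrix.add_apply, Matrix.smul_apply, Matrix.one_apply, h10,h20,h30,h21,h31,h32,h33,h12,h00,h11]
    · rintro ⟨h10,h20,h30,h21,h31,h32,h12,h00,h11⟩
      refine ⟨R 3 3, R - R 3 3 • 1, ?_, by simp⟩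
      rw [der_iff]
      refine ⟨?_,?_,?_,?_,?_,?_,?_,?_,?_,?_⟩ <;>
        simp [Matrix.sub_apply, Matrix.smul_apply, Matrix.one_apply, h10,h20,h30,h21,h31,h32,h12,h00,h11]
  · intro η D hD hR
    rw [der_iff] at hD
    have h := congrFun (congrFun hR 3) 3
    simp [Matrix.add_apply, Matrix.smul_apply, Matrix.one_apply] at h
    linarith [hD.2.2.2.2.2.2.1]
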